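/- arXiv:2602.11458 — 2 statements merged into one kernel-verified Lean document; each statement's English description precedes it below -/
import Mathlib

section
/- Fix $0<\theta\leq 1$ and positive integers $L\geq 2$ and $N\geq m$, where $m=\lceil\theta L\rceil$. With $r(t)=\lceil\theta t\rceil$ and $I=\{1\leq t\leq L: r(t)=r(t-1)+1\}$, one has $\prod_{t\in\{1,\ldots,L\}\setminus I} r(t-1)\geq \theta^{L-1} m^{L-m}$, and consequently $\log\#\mathcal{B}\geq m\log N - m + (L-m)\log m + (L-1)\log\theta$, where $\mathcal{B}$ is the set of words $(d_1,\ldots,d_L)$ over an alphabet of size $N$ whose prefix distinctness equals $r(t)$ for every $t$. -/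
open Finset Nat

namespace Stmt6Aux

noncomputable def rr (θ : ℝ) (t : ℕ) : ℕ := ⌈θ * (t : ℝ)⌉₊

variable {θ : ℝ}

lemma rr_zero : rr θ 0 = 0 := by simp [rr]

lemma rr_one (hθ0 : 0 < θ) (hθ1 : θ ≤ 1) : rr θ 1 = 1 := by
  have h1 : ⌈θ * (1:ℝ)⌉₊ ≤ ⌈(1:ℝ)⌉₊ := Nat.ceil_le_ceil (by nlinarith)
  have h2 : 0 < ⌈θ * (1:ℝ)⌉₊ := Nat.ceil_pos.mpr (by nlinarith)
  have h3 : ⌈(1:ℝ)⌉₊ = 1 := Nat.ceil_one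
  simp only [rr, Nat.cast_one]
  omega

lemma rr_mono (hθ0 : 0 ≤ θ) : Monotone (rr θ) := by
  intro a b hab
  exact Nat.ceil_le_ceil (by
    have : (a:ℝ) ≤ b := by exact_mod_cast hab
    nlinarith)

lemma rr_succ_le (hθ0 : 0 ≤ θ) (hθ1 : θ ≤ 1) (t : ℕ) : rr θ (t + 1) ≤ rr θ t + 1 := by
  have h1 : θ * ((t : ℝ) + 1) ≤ θ * t + 1 := by nlinarith
  have h2 : ⌈θ * ((t:ℝ)+1)⌉₊ ≤ ⌈θ * (t:ℝ) + 1⌉₊ := Nat.ceil_le_ceil h1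
  have h3 : ⌈θ * (t:ℝ) + 1⌉₊ = ⌈θ * (t:ℝ)⌉₊ + 1 :=
    Nat.ceil_add_one (by positivity)
  have h4 : rr θ (t+1) = ⌈θ * ((t:ℝ)+1)⌉₊ := by simp [rr]
  simp only [rr] at *
  omega

lemma rr_step (hθ0 : 0 ≤ θ) (hθ1 : θ ≤ 1) (t : ℕ) :
    rr θ (t + 1) = rr θ t ∨ rr θ (t + 1) = rr θ t + 1 := by
  have h1 := rr_mono hθ0 (Nat.le_succ t)
  have h2 := rr_succ_le hθ0 hθ1 t
  simp only [Nat.succ_eq_add_one] at h1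
  omega

lemma rr_exists (hθ0 : 0 ≤ θ) (hθ1 : θ ≤ 1) (L : ℕ) :
    ∀ v ≤ rr θ L, ∃ t ≤ L, rr θ t = v := by
  induction L with
  | zero =>
    intro v hv
    rw [rr_zero] at hv
    exact ⟨0, le_refl 0, by rw [rr_zero]; omega⟩
  | succ L ih =>
    intro v hv
    rcases rr_step hθ0 hθ1 L with h | h
    · obtain ⟨t, ht, htv⟩ := ih v (by omega)
      exact ⟨t, by omega, htv⟩
    · by_cases hv' : v ≤ rr θ L
      · obtain ⟨t, ht, htv⟩ := ih v hv'
        exact ⟨t, by omega, htv⟩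
      · exact ⟨L+1, le_refl _, by omega⟩

variable {θ : ℝ}

lemma prodI (hθ0 : 0 < θ) (hθ1 : θ ≤ 1) :
    ∀ L, 1 ≤ L →
      (∏ t ∈ (Icc 2 L).filter (fun t => rr θ t = rr θ (t-1) + 1), rr θ (t-1))
        = (rr θ L - 1) ! := by
  intro L hL
  induction L, hL using Nat.le_induction with
  | base => simp [rr_one hθ0 hθ1]
  | succ L hL ih =>
    have hr1 : 1 ≤ rr θ L := by
      have := rr_mono hθ0.le hL
      rw [rr_one hθ0 hθ1] at this
      exact this
    rw [prod_filter] at ih ⊢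
    rw [prod_Icc_succ_top (by omega)]
    rw [ih]
    rcases rr_step hθ0.le hθ1 L with h | h
    · simp only [Nat.add_sub_cancel, h]
      rw [if_neg (by omega)]
      omega
    · simp only [Nat.add_sub_cancel, h, if_true]
      rw [mul_comm]
      exact Nat.mul_factorial_pred (by omega)

lemma prod_Icc2_fact :
    ∀ L, 1 ≤ L → (∏ t ∈ Icc 2 L, ((t - 1 : ℕ) : ℝ)) = ((L-1) ! : ℝ) := by
  intro L hL
  induction L, hL using Nat.le_induction with
  | base => simp
  | succ L hL ih =>
    rw [prod_Icc_succ_top (by omega), ih]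
    simp only [Nat.add_sub_cancel]
    have h := Nat.mul_factorial_pred (n := L) (by omega)
    have : ((L) ! : ℝ) = (L : ℝ) * ((L-1) ! : ℝ) := by exact_mod_cast h.symm
    rw [this]; ring

lemma prod_Icc2_ge (hθ0 : 0 < θ) (hθ1 : θ ≤ 1) (L : ℕ) (hL : 1 ≤ L) :
    θ ^ (L - 1) * ((L-1) ! : ℝ) ≤ ∏ t ∈ Icc 2 L, (rr θ (t-1) : ℝ) := by
  have key : (∏ t ∈ Icc 2 L, (θ * ((t - 1 : ℕ) : ℝ)))
      ≤ ∏ t ∈ Icc 2 L, (rr θ (t-1) : ℝ) := by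
    apply prod_le_prod
    · intro t _; positivity
    · intro t _; exact Nat.le_ceil _
  calc θ ^ (L - 1) * ((L-1) ! : ℝ)
      = ∏ t ∈ Icc 2 L, (θ * ((t - 1 : ℕ) : ℝ)) := by
        rw [prod_mul_distrib, prod_const, Nat.card_Icc, prod_Icc2_fact L hL]
        have h2 : L + 1 - 2 = L - 1 := by omega
        rw [h2]
    _ ≤ _ := key

lemma fact_div (m : ℕ) (hm : 1 ≤ m) :
    ∀ L, m ≤ L → m ^ (L - m) * (m-1) ! ≤ (L-1) ! := by
  intro L hL
  induction L, hL using Nat.le_induction with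
  | base => simp
  | succ L hL ih =>
    have h1 : L + 1 - m = (L - m) + 1 := by omega
    rw [h1, pow_succ, Nat.add_sub_cancel]
    calc m ^ (L - m) * m * (m-1) ! = m * (m ^ (L-m) * (m-1) !) := by ring
      _ ≤ m * (L-1) ! := Nat.mul_le_mul_left m ih
      _ ≤ L * (L-1) ! := Nat.mul_le_mul_right _ hL
      _ = L ! := Nat.mul_factorial_pred (by omega)

lemma pow_le_exp_factorial : ∀ m : ℕ, (m:ℝ) ^ m ≤ Real.exp m * (m) ! := by
  intro m
  induction m with
  | zero => simp
  | succ m ih =>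
    rcases Nat.eq_zero_or_pos m with hm | hm
    · subst hm
      have h1 : (1:ℝ) ≤ Real.exp 1 := by have := Real.add_one_le_exp (1:ℝ); linarith
      simpa using h1
    · have hm' : (0:ℝ) < m := by exact_mod_cast hm
      have step : ((m:ℝ) + 1) ^ m ≤ Real.exp 1 * (m:ℝ) ^ m := by
        have h1 : (m:ℝ) + 1 = (m:ℝ) * (1 + 1/m) := by field_simp
        have h2 : (1 + 1/(m:ℝ)) ≤ Real.exp (1/m) := by
          have := Real.add_one_le_exp (1/(m:ℝ)); linarith
        have h3 : (1 + 1/(m:ℝ)) ^ m ≤ Real.exp (1/m) ^ m := by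
          apply pow_le_pow_left₀ (by positivity) h2
        have h4 : Real.exp (1/(m:ℝ)) ^ m = Real.exp 1 := by
          rw [← Real.exp_nat_mul]
          congr 1
          field_simp
        calc ((m:ℝ) + 1) ^ m = (m:ℝ) ^ m * (1 + 1/m) ^ m := by
              rw [h1, mul_pow]
          _ ≤ (m:ℝ) ^ m * Real.exp 1 := by
              apply mul_le_mul_of_nonneg_left (h4 ▸ h3) (by positivity)
          _ = Real.exp 1 * (m:ℝ) ^ m := by ring
      have hfact : ((m+1:ℕ) ! : ℝ) = ((m:ℝ)+1) * ((m) ! : ℝ) := by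
        rw [Nat.factorial_succ]; push_cast; ring
      have hexp : Real.exp ((m:ℝ)+1) = Real.exp 1 * Real.exp m := by
        rw [← Real.exp_add]; ring_nf
      calc ((m+1:ℕ):ℝ) ^ (m+1) = ((m:ℝ)+1) * ((m:ℝ)+1) ^ m := by
            push_cast; ring
        _ ≤ ((m:ℝ)+1) * (Real.exp 1 * (m:ℝ) ^ m) := by
            apply mul_le_mul_of_nonneg_left step (by positivity)
        _ ≤ ((m:ℝ)+1) * (Real.exp 1 * (Real.exp m * (m) !)) := by
            apply mul_le_mul_of_nonneg_left _ (by positivity)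
            apply mul_le_mul_of_nonneg_left ih (by positivity)
        _ = Real.exp (((m+1:ℕ)):ℝ) * ((m+1:ℕ) ! : ℝ) := by
            rw [hfact]
            have : Real.exp (((m+1:ℕ)):ℝ) = Real.exp 1 * Real.exp m := by
              push_cast
              rw [← Real.exp_add]
              ring_nf
            rw [this]
            ring

lemma desc_ge (m N : ℕ) (h : m ≤ N) :
    (N:ℝ) ^ m * ((m) ! : ℝ) ≤ (m:ℝ) ^ m * (N.descFactorial m : ℝ) := by
  have hdesc : (N.descFactorial m : ℝ) = ∏ i ∈ range m, ((N - i : ℕ) : ℝ) := by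
    rw [Nat.descFactorial_eq_prod_range]; push_cast; rfl
  have hfac : (∏ i ∈ range m, ((m - i : ℕ) : ℝ)) = ((m) ! : ℝ) := by
    have h1 : ((m) ! : ℝ) = ∏ j ∈ range m, ((j + 1 : ℕ) : ℝ) := by
      rw [← Finset.prod_range_add_one_eq_factorial]
      push_cast
      rfl
    rw [h1, ← Finset.prod_range_reflect (fun j => ((j + 1 : ℕ) : ℝ)) m]
    apply Finset.prod_congr rfl
    intro i hi
    rw [mem_range] at hi
    congr 1
    omega
  calc (N:ℝ) ^ m * ((m) ! : ℝ)
      = ∏ i ∈ range m, ((N:ℝ) * ((m - i : ℕ) : ℝ)) := by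
        rw [prod_mul_distrib, prod_const, card_range, hfac]
    _ ≤ ∏ i ∈ range m, ((m:ℝ) * ((N - i : ℕ) : ℝ)) := by
        apply prod_le_prod
        · intro i _; positivity
        · intro i hi
          rw [mem_range] at hi
          rw [Nat.cast_sub (by omega), Nat.cast_sub (by omega)]
          have hi' : (i:ℝ) ≤ m := by exact_mod_cast hi.le
          have hNm : (m:ℝ) ≤ N := by exact_mod_cast h
          have hi0 : (0:ℝ) ≤ i := by positivity
          nlinarith
    _ = (m:ℝ) ^ m * (N.descFactorial m : ℝ) := by
        rw [prod_mul_distrib, prod_const, card_range, hdesc]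



noncomputable def Eaux (m : ℕ) (A : Finset ℕ) (a0 : ↥A) (e : Fin m ↪ ↥A) (j : ℕ) : ↥A :=
  if h : j < m then e ⟨j, h⟩ else a0

noncomputable def idxAux (θ : ℝ) (J : Finset ℕ)
    (c : ∀ t : {x // x ∈ J}, Fin (rr θ (t.1 - 1))) (t : ℕ) : ℕ :=
  if rr θ t = rr θ (t - 1) + 1 then rr θ (t - 1)
  else if h : t ∈ J then (c ⟨t, h⟩ : ℕ) else 0

lemma count_lb (hθ0 : 0 < θ) (hθ1 : θ ≤ 1) (L N : ℕ) (hL : 2 ≤ L)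
    (hNm : rr θ L ≤ N) (A : Finset ℕ) (hA : A.card = N) :
    N.descFactorial (rr θ L) *
      ∏ t ∈ (Icc 1 L).filter (fun t => ¬ (rr θ t = rr θ (t - 1) + 1)), rr θ (t - 1)
      ≤ Nat.card {d : Fin L → A //
          ∀ t : ℕ, 1 ≤ t → t ≤ L →
            ((Finset.univ.filter (fun i : Fin L => (i : ℕ) < t)).image
              (fun i => ((d i : ℕ)))).card = rr θ t} := by
  classical
  have hm1 : 1 ≤ rr θ L := by
    have h := rr_mono hθ0.le (show 1 ≤ L by omega)
    rw [rr_one hθ0 hθ1] at h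
    exact h
  have hAne : A.Nonempty := by
    rw [← Finset.card_pos, hA]; omega
  obtain ⟨a0, ha0⟩ := hAne
  set m := rr θ L with hmdef
  set J := (Icc 1 L).filter (fun t => ¬ (rr θ t = rr θ (t - 1) + 1)) with hJ
  have hrle : ∀ t, t ≤ L → rr θ t ≤ m := fun t ht => rr_mono hθ0.le ht
  have hidx : ∀ (c : ∀ t : {x // x ∈ J}, Fin (rr θ (t.1 - 1))) (t : ℕ),
      1 ≤ t → t ≤ L → idxAux θ J c t < m := by
    intro c t ht1 htL
    by_cases h : rr θ t = rr θ (t - 1) + 1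
    · rw [idxAux, if_pos h]
      have := hrle t htL
      omega
    · have htJ : t ∈ J := by
        rw [hJ, mem_filter, mem_Icc]
        exact ⟨⟨ht1, htL⟩, h⟩
      rw [idxAux, if_neg h, dif_pos htJ]
      have h1 : ((c ⟨t, htJ⟩ : ℕ)) < rr θ (t - 1) := (c ⟨t, htJ⟩).isLt
      have h2 := hrle (t - 1) (by omega)
      omega
  set F : (Fin m ↪ ↥A) × (∀ t : {x // x ∈ J}, Fin (rr θ (t.1 - 1))) → (Fin L → ↥A) :=
    fun p i => Eaux m A ⟨a0, ha0⟩ p.1 (idxAux θ J p.2 ((i : ℕ) + 1)) with hF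
  have key : ∀ (e : Fin m ↪ ↥A) (c : ∀ t : {x // x ∈ J}, Fin (rr θ (t.1 - 1))),
      ∀ t, t ≤ L →
      ((Finset.univ.filter (fun i : Fin L => (i : ℕ) < t)).image
          (fun i => ((F (e, c) i : ℕ))))
        = (range (rr θ t)).image (fun j => ((Eaux m A ⟨a0, ha0⟩ e j : ℕ))) := by
    intro e c t
    induction t with
    | zero => simp [rr_zero]
    | succ t ih =>
      intro ht
      have ht' : t ≤ L := by omega
      have htlt : t < L := by omega
      have hfil : Finset.univ.filter (fun i : Fin L => (i : ℕ) < t + 1)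
          = insert (⟨t, htlt⟩ : Fin L)
              (Finset.univ.filter (fun i : Fin L => (i : ℕ) < t)) := by
        ext i
        simp only [mem_filter, mem_univ, true_and, mem_insert, Fin.ext_iff]
        omega
      rw [hfil, image_insert, ih ht']
      by_cases h : rr θ (t + 1) = rr θ t + 1
      · have hcond : rr θ (t + 1) = rr θ ((t + 1) - 1) + 1 := by
          simpa using h
        have hd : F (e, c) (⟨t, htlt⟩ : Fin L) = Eaux m A ⟨a0, ha0⟩ e (rr θ t) := by
          show Eaux m A ⟨a0, ha0⟩ e (idxAux θ J c (((⟨t, htlt⟩ : Fin L) : ℕ) + 1)) = _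
          have h0 : ((⟨t, htlt⟩ : Fin L) : ℕ) + 1 = t + 1 := rfl
          rw [h0]
          simp only [idxAux]
          rw [if_pos hcond]
          norm_num
        rw [hd, h, Finset.range_add_one, image_insert]
      · have hstep := rr_step hθ0.le hθ1 t
        have heq : rr θ (t + 1) = rr θ t := by tauto
        have hcond : ¬ (rr θ (t + 1) = rr θ ((t + 1) - 1) + 1) := by
          simpa using h
        have htJ : t + 1 ∈ J := by
          rw [hJ, mem_filter, mem_Icc]
          refine ⟨⟨by omega, by omega⟩, ?_⟩
          simpa using h
        have hd : F (e, c) (⟨t, htlt⟩ : Fin L)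
            = Eaux m A ⟨a0, ha0⟩ e ((c ⟨t + 1, htJ⟩ : ℕ)) := by
          show Eaux m A ⟨a0, ha0⟩ e (idxAux θ J c (((⟨t, htlt⟩ : Fin L) : ℕ) + 1)) = _
          have h0 : ((⟨t, htlt⟩ : Fin L) : ℕ) + 1 = t + 1 := rfl
          conv_lhs => rw [h0]
          simp only [idxAux]
          rw [if_neg hcond, dif_pos htJ]
        rw [hd, heq]
        apply Finset.insert_eq_self.mpr
        apply Finset.mem_image_of_mem
        rw [mem_range]
        have hc := (c ⟨t + 1, htJ⟩).isLt
        simpa using hc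
  have hEinj : ∀ (e : Fin m ↪ ↥A) (j j' : ℕ), j < m → j' < m →
      ((Eaux m A ⟨a0, ha0⟩ e j : ℕ)) = ((Eaux m A ⟨a0, ha0⟩ e j' : ℕ)) → j = j' := by
    intro e j j' hj hj' hEq
    rw [Eaux, dif_pos hj, Eaux, dif_pos hj'] at hEq
    have h1 : e ⟨j, hj⟩ = e ⟨j', hj'⟩ := Subtype.ext hEq
    have h2 := e.injective h1
    exact congrArg Fin.val h2
  have hprof : ∀ (e : Fin m ↪ ↥A) (c : ∀ t : {x // x ∈ J}, Fin (rr θ (t.1 - 1))),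
      ∀ t : ℕ, 1 ≤ t → t ≤ L →
      ((Finset.univ.filter (fun i : Fin L => (i : ℕ) < t)).image
          (fun i => ((F (e, c) i : ℕ)))).card = rr θ t := by
    intro e c t _ htL
    rw [key e c t htL]
    rw [Finset.card_image_of_injOn, Finset.card_range]
    intro j hj j' hj' hEq
    rw [mem_coe, mem_range] at hj hj'
    have h1 : rr θ t ≤ m := hrle t htL
    exact hEinj e j j' (by omega) (by omega) hEq
  set G : (Fin m ↪ ↥A) × (∀ t : {x // x ∈ J}, Fin (rr θ (t.1 - 1))) →
      {d : Fin L → A //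
        ∀ t : ℕ, 1 ≤ t → t ≤ L →
          ((Finset.univ.filter (fun i : Fin L => (i : ℕ) < t)).image
            (fun i => ((d i : ℕ)))).card = rr θ t} :=
    fun p => ⟨F p, hprof p.1 p.2⟩ with hG
  have hGinj : Function.Injective G := by
    intro p q hpq
    have hFeq : F p = F q := congrArg Subtype.val hpq
    have he : p.1 = q.1 := by
      apply Function.Embedding.ext
      intro j
      have hjm : (j : ℕ) < m := j.isLt
      have hex : ∃ t, t ≤ L ∧ rr θ t = (j : ℕ) + 1 := by
        obtain ⟨t, ht, htv⟩ := rr_exists hθ0.le hθ1 L ((j : ℕ) + 1) (by omega)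
        exact ⟨t, ht, htv⟩
      have hex' : ∃ t, rr θ t = (j : ℕ) + 1 := ⟨hex.choose, hex.choose_spec.2⟩
      set t0 := Nat.find hex' with ht0def
      have ht0 : rr θ t0 = (j : ℕ) + 1 := Nat.find_spec hex'
      have ht0L : t0 ≤ L :=
        le_trans (Nat.find_min' hex' hex.choose_spec.2) hex.choose_spec.1
      have ht01 : 1 ≤ t0 := by
        by_contra hcon
        have h0 : t0 = 0 := by omega
        rw [h0, rr_zero] at ht0
        omega
      have hprev : rr θ (t0 - 1) = (j : ℕ) := by
        have hne : rr θ (t0 - 1) ≠ (j : ℕ) + 1 :=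
          Nat.find_min hex' (show t0 - 1 < t0 by omega)
        have hmono : rr θ (t0 - 1) ≤ rr θ t0 := rr_mono hθ0.le (by omega)
        have hsucc : rr θ t0 ≤ rr θ (t0 - 1) + 1 := by
          have hs := rr_succ_le hθ0.le hθ1 (t0 - 1)
          have hp : t0 - 1 + 1 = t0 := by omega
          rwa [hp] at hs
        omega
      have hcond : rr θ t0 = rr θ (t0 - 1) + 1 := by omega
      have ht0lt : t0 - 1 < L := by omega
      have hval : ∀ (r : (Fin m ↪ ↥A) × (∀ t : {x // x ∈ J}, Fin (rr θ (t.1 - 1)))),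
          F r (⟨t0 - 1, ht0lt⟩ : Fin L) = r.1 j := by
        intro r
        show Eaux m A ⟨a0, ha0⟩ r.1 (idxAux θ J r.2 (((⟨t0 - 1, ht0lt⟩ : Fin L) : ℕ) + 1)) = _
        have h0 : ((⟨t0 - 1, ht0lt⟩ : Fin L) : ℕ) + 1 = t0 := by
          show t0 - 1 + 1 = t0
          omega
        rw [h0]
        simp only [idxAux]
        rw [if_pos hcond, hprev]
        simp only [Eaux]
        rw [dif_pos hjm]
      have := congrFun hFeq (⟨t0 - 1, ht0lt⟩ : Fin L)
      rw [hval p, hval q] at this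
      exact this
    have hc : p.2 = q.2 := by
      funext t
      obtain ⟨t, htJ⟩ := t
      have htprop : t ∈ Icc 1 L ∧ ¬ (rr θ t = rr θ (t - 1) + 1) := by
        have h0 := htJ
        rw [hJ, mem_filter] at h0
        exact h0
      rw [mem_Icc] at htprop
      obtain ⟨⟨ht1, htL⟩, hcond⟩ := htprop
      have htlt : t - 1 < L := by omega
      have hbound : ∀ (c : ∀ t : {x // x ∈ J}, Fin (rr θ (t.1 - 1))),
          ((c ⟨t, htJ⟩ : ℕ)) < m := by
        intro c
        have h1 : ((c ⟨t, htJ⟩ : ℕ)) < rr θ (t - 1) := (c ⟨t, htJ⟩).isLt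
        have h2 := hrle (t - 1) (by omega)
        omega
      have hval : ∀ (r : (Fin m ↪ ↥A) × (∀ t : {x // x ∈ J}, Fin (rr θ (t.1 - 1)))),
          F r (⟨t - 1, htlt⟩ : Fin L) = r.1 ⟨(r.2 ⟨t, htJ⟩ : ℕ), hbound r.2⟩ := by
        intro r
        show Eaux m A ⟨a0, ha0⟩ r.1 (idxAux θ J r.2 (((⟨t - 1, htlt⟩ : Fin L) : ℕ) + 1)) = _
        have h0 : ((⟨t - 1, htlt⟩ : Fin L) : ℕ) + 1 = t := by
          show t - 1 + 1 = t
          omega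
        conv_lhs => rw [h0]
        simp only [idxAux]
        rw [if_neg hcond, dif_pos htJ]
        simp only [Eaux]
        rw [dif_pos (hbound r.2)]
      have hcomp := congrFun hFeq (⟨t - 1, htlt⟩ : Fin L)
      rw [hval p, hval q, ← he] at hcomp
      have h3 := p.1.injective hcomp
      have h4 : ((p.2 ⟨t, htJ⟩ : ℕ)) = ((q.2 ⟨t, htJ⟩ : ℕ)) := by
        have := congrArg Fin.val h3
        simpa using this
      exact Fin.ext h4
    exact Prod.ext he hc
  have hcard := Nat.card_le_card_of_injective G hGinj
  have hTcard : Nat.card ((Fin m ↪ ↥A) × (∀ t : {x // x ∈ J}, Fin (rr θ (t.1 - 1))))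
      = N.descFactorial m * ∏ t ∈ J, rr θ (t - 1) := by
    rw [Nat.card_eq_fintype_card, Fintype.card_prod, Fintype.card_embedding_eq,
      Fintype.card_coe, hA, Fintype.card_fin]
    congr 1
    rw [Fintype.card_pi]
    simp only [Fintype.card_fin]
    exact Finset.prod_coe_sort J (fun t => rr θ (t - 1))
  rw [hTcard] at hcard
  exact hcard




lemma part1 (hθ0 : 0 < θ) (hθ1 : θ ≤ 1) (L : ℕ) (hL : 2 ≤ L) :
    θ ^ (L - 1) * ((rr θ L : ℝ)) ^ (L - rr θ L) ≤
      ∏ t ∈ (Icc 1 L).filter (fun t => ¬ (rr θ t = rr θ (t - 1) + 1)),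
        (rr θ (t - 1) : ℝ) := by
  have hm1 : 1 ≤ rr θ L := by
    have h := rr_mono hθ0.le (show 1 ≤ L by omega)
    rw [rr_one hθ0 hθ1] at h
    exact h
  have hmL : rr θ L ≤ L := by
    apply Nat.ceil_le.mpr
    have : (0:ℝ) ≤ L := by positivity
    nlinarith
  set m := rr θ L with hm
  have hJeq : (Icc 1 L).filter (fun t => ¬ (rr θ t = rr θ (t - 1) + 1))
      = (Icc 2 L).filter (fun t => ¬ (rr θ t = rr θ (t - 1) + 1)) := by
    ext t
    simp only [mem_filter, mem_Icc]
    constructor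
    · rintro ⟨⟨h1, h2⟩, h3⟩
      refine ⟨⟨?_, h2⟩, h3⟩
      by_contra hcon
      have ht1 : t = 1 := by omega
      subst ht1
      apply h3
      show rr θ 1 = rr θ 0 + 1
      rw [rr_one hθ0 hθ1, rr_zero]
    · rintro ⟨⟨h1, h2⟩, h3⟩
      exact ⟨⟨by omega, h2⟩, h3⟩
  have hfact : (0:ℝ) < ((m - 1) ! : ℝ) := by
    have := Nat.factorial_pos (m - 1)
    exact_mod_cast this
  have hsplit := Finset.prod_filter_mul_prod_filter_not (Icc 2 L)
      (fun t => rr θ t = rr θ (t - 1) + 1) (fun t => (rr θ (t - 1) : ℝ))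
  have hI : (∏ t ∈ (Icc 2 L).filter (fun t => rr θ t = rr θ (t - 1) + 1),
      (rr θ (t - 1) : ℝ)) = ((m - 1) ! : ℝ) := by
    exact_mod_cast congrArg (fun n : ℕ => (n : ℝ)) (prodI hθ0 hθ1 L (by omega))
  have hf' : ((m:ℝ)) ^ (L - m) * ((m - 1) ! : ℝ) ≤ ((L - 1) ! : ℝ) := by
    exact_mod_cast fact_div m hm1 L hmL
  have hchain : θ ^ (L - 1) * ((m:ℝ)) ^ (L - m) * ((m - 1) ! : ℝ)
      ≤ (∏ t ∈ (Icc 2 L).filter (fun t => ¬ (rr θ t = rr θ (t - 1) + 1)),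
          (rr θ (t - 1) : ℝ)) * ((m - 1) ! : ℝ) := by
    calc θ ^ (L - 1) * ((m:ℝ)) ^ (L - m) * ((m - 1) ! : ℝ)
        = θ ^ (L - 1) * (((m:ℝ)) ^ (L - m) * ((m - 1) ! : ℝ)) := by ring
      _ ≤ θ ^ (L - 1) * ((L - 1) ! : ℝ) :=
          mul_le_mul_of_nonneg_left hf' (by positivity)
      _ ≤ ∏ t ∈ Icc 2 L, (rr θ (t - 1) : ℝ) := prod_Icc2_ge hθ0 hθ1 L (by omega)
      _ = _ := by rw [← hsplit, hI]; ring
  rw [hJeq]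
  exact le_of_mul_le_mul_right hchain hfact

lemma log_desc (m N : ℕ) (hm : 1 ≤ m) (h : m ≤ N) :
    (m:ℝ) * Real.log N - m ≤ Real.log (N.descFactorial m) := by
  have hdesc0 : (0:ℝ) < (N.descFactorial m : ℝ) := by
    have h0 : N.descFactorial m ≠ 0 := by
      intro hc
      rw [Nat.descFactorial_eq_zero_iff_lt] at hc
      omega
    have : 0 < N.descFactorial m := Nat.pos_of_ne_zero h0
    exact_mod_cast this
  have hfac0 : (0:ℝ) < ((m) ! : ℝ) := by
    have := Nat.factorial_pos m
    exact_mod_cast this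
  have h1 := desc_ge m N h
  have h2 := pow_le_exp_factorial m
  have h3 : (N:ℝ) ^ m * ((m) ! : ℝ)
      ≤ (Real.exp m * (N.descFactorial m : ℝ)) * ((m) ! : ℝ) := by
    calc (N:ℝ) ^ m * ((m) ! : ℝ) ≤ (m:ℝ) ^ m * (N.descFactorial m : ℝ) := h1
      _ ≤ (Real.exp m * ((m) ! : ℝ)) * (N.descFactorial m : ℝ) :=
          mul_le_mul_of_nonneg_right h2 hdesc0.le
      _ = (Real.exp m * (N.descFactorial m : ℝ)) * ((m) ! : ℝ) := by ring
  have h4 : (N:ℝ) ^ m ≤ Real.exp m * (N.descFactorial m : ℝ) :=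
    le_of_mul_le_mul_right h3 hfac0
  have hN0 : (0:ℝ) < (N:ℝ) := by
    have : 0 < N := by omega
    exact_mod_cast this
  have h5 : Real.log ((N:ℝ) ^ m) ≤ Real.log (Real.exp m * (N.descFactorial m : ℝ)) :=
    Real.log_le_log (by positivity) h4
  rw [Real.log_pow, Real.log_mul (Real.exp_ne_zero _) (ne_of_gt hdesc0),
    Real.log_exp] at h5
  linarith

end Stmt6Aux

open Finset Stmt6Aux

/-- Lower bounds for the block count: the repeat-time product is at least `θ^{L-1} m^{L-m}`,
and consequently `log #B ≥ m log N - m + (L-m) log m + (L-1) log θ`. -/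
theorem stmt6 (θ : ℝ) (hθ0 : 0 < θ) (hθ1 : θ ≤ 1) (Lb N : ℕ) (hLb : 2 ≤ Lb)
    (hNm : ⌈θ * (Lb : ℝ)⌉₊ ≤ N) :
    θ ^ (Lb - 1) * ((⌈θ * (Lb : ℝ)⌉₊ : ℝ)) ^ (Lb - ⌈θ * (Lb : ℝ)⌉₊) ≤
      (∏ t ∈ (Finset.Icc 1 Lb).filter
          (fun t : ℕ => ¬ (⌈θ * (t : ℝ)⌉₊ = ⌈θ * ((t - 1 : ℕ) : ℝ)⌉₊ + 1)),
        (⌈θ * ((t - 1 : ℕ) : ℝ)⌉₊ : ℝ)) ∧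
    ∀ A : Finset ℕ, A.card = N →
      (⌈θ * (Lb : ℝ)⌉₊ : ℝ) * Real.log N - (⌈θ * (Lb : ℝ)⌉₊ : ℝ)
          + ((Lb : ℝ) - (⌈θ * (Lb : ℝ)⌉₊ : ℝ)) * Real.log (⌈θ * (Lb : ℝ)⌉₊ : ℝ)
          + ((Lb : ℝ) - 1) * Real.log θ ≤
        Real.log (Nat.card {d : Fin Lb → A //
          ∀ t : ℕ, 1 ≤ t → t ≤ Lb →
            ((Finset.univ.filter (fun i : Fin Lb => (i : ℕ) < t)).image
              (fun i => ((d i : ℕ)))).card = ⌈θ * (t : ℝ)⌉₊}) := by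
  have hm1 : 1 ≤ rr θ Lb := by
    have h := rr_mono hθ0.le (show 1 ≤ Lb by omega)
    rw [rr_one hθ0 hθ1] at h
    exact h
  have hmL : rr θ Lb ≤ Lb := by
    apply Nat.ceil_le.mpr
    have : (0:ℝ) ≤ Lb := by positivity
    nlinarith
  constructor
  · exact part1 hθ0 hθ1 Lb hLb
  · intro A hA
    have hNm' : rr θ Lb ≤ N := hNm
    set m := rr θ Lb with hm
    set J := (Icc 1 Lb).filter (fun t => ¬ (rr θ t = rr θ (t - 1) + 1)) with hJ
    -- positivity of the product
    have hprodpos : 0 < ∏ t ∈ J, rr θ (t - 1) := by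
      apply Finset.prod_pos
      intro t ht
      rw [hJ, mem_filter, mem_Icc] at ht
      obtain ⟨⟨ht1, htL⟩, hcond⟩ := ht
      have ht2 : 2 ≤ t := by
        by_contra hcon
        have ht1' : t = 1 := by omega
        subst ht1'
        apply hcond
        show rr θ 1 = rr θ 0 + 1
        rw [rr_one hθ0 hθ1, rr_zero]
      have := rr_mono hθ0.le (show 1 ≤ t - 1 by omega)
      rw [rr_one hθ0 hθ1] at this
      omega
    have hdescpos : 0 < N.descFactorial m := by
      apply Nat.pos_of_ne_zero
      intro hc
      rw [Nat.descFactorial_eq_zero_iff_lt] at hc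
      omega
    -- log of the product part
    have hpart1 := part1 hθ0 hθ1 Lb hLb
    have hprodR : (0:ℝ) < ∏ t ∈ J, (rr θ (t - 1) : ℝ) := by
      apply Finset.prod_pos
      intro t ht
      rw [hJ, mem_filter, mem_Icc] at ht
      obtain ⟨⟨ht1, htL⟩, hcond⟩ := ht
      have ht2 : 2 ≤ t := by
        by_contra hcon
        have ht1' : t = 1 := by omega
        subst ht1'
        apply hcond
        show rr θ 1 = rr θ 0 + 1
        rw [rr_one hθ0 hθ1, rr_zero]
      have h1 := rr_mono hθ0.le (show 1 ≤ t - 1 by omega)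
      rw [rr_one hθ0 hθ1] at h1
      have : 0 < rr θ (t - 1) := by omega
      exact_mod_cast this
    have hlogprod : ((Lb:ℝ) - 1) * Real.log θ + ((Lb:ℝ) - (m:ℝ)) * Real.log (m:ℝ)
        ≤ Real.log (∏ t ∈ J, (rr θ (t - 1) : ℝ)) := by
      have hpos : (0:ℝ) < θ ^ (Lb - 1) * ((m:ℝ)) ^ (Lb - m) := by positivity
      have h1 := Real.log_le_log hpos hpart1
      rw [Real.log_mul (by positivity) (by positivity), Real.log_pow, Real.log_pow] at h1
      have hc1 : ((Lb - 1 : ℕ) : ℝ) = (Lb:ℝ) - 1 := by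
        rw [Nat.cast_sub (by omega)]; norm_num
      have hc2 : ((Lb - m : ℕ) : ℝ) = (Lb:ℝ) - (m:ℝ) := by
        rw [Nat.cast_sub hmL]
      rw [hc1, hc2] at h1
      linarith
    have hlogdesc := log_desc m N hm1 (by omega)
    -- combine
    have hcastprod : ((∏ t ∈ J, rr θ (t - 1) : ℕ) : ℝ) = ∏ t ∈ J, (rr θ (t - 1) : ℝ) := by
      push_cast
      rfl
    have hKpos : (0:ℝ) < (N.descFactorial m : ℝ) * ((∏ t ∈ J, rr θ (t - 1) : ℕ) : ℝ) := by
      have : 0 < N.descFactorial m * ∏ t ∈ J, rr θ (t - 1) := Nat.mul_pos hdescpos hprodpos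
      exact_mod_cast this
    have hlogK : Real.log ((N.descFactorial m : ℝ) * ((∏ t ∈ J, rr θ (t - 1) : ℕ) : ℝ))
        ≤ Real.log (Nat.card {d : Fin Lb → A //
          ∀ t : ℕ, 1 ≤ t → t ≤ Lb →
            ((Finset.univ.filter (fun i : Fin Lb => (i : ℕ) < t)).image
              (fun i => ((d i : ℕ)))).card = rr θ t}) := by
      apply Real.log_le_log hKpos
      have hcount := count_lb hθ0 hθ1 Lb N hLb hNm' A hA
      exact_mod_cast hcount
    have hd0 : (N.descFactorial m : ℝ) ≠ 0 := ne_of_gt (by exact_mod_cast hdescpos)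
    have hp0 : ((∏ t ∈ J, rr θ (t - 1) : ℕ) : ℝ) ≠ 0 := by
      rw [hcastprod]; exact ne_of_gt hprodR
    rw [Real.log_mul hd0 hp0, hcastprod] at hlogK
    have := hlogprod
    calc (m:ℝ) * Real.log N - (m:ℝ) + ((Lb:ℝ) - (m:ℝ)) * Real.log (m:ℝ)
          + ((Lb:ℝ) - 1) * Real.log θ
        ≤ Real.log (N.descFactorial m : ℝ) + Real.log (∏ t ∈ J, (rr θ (t - 1) : ℝ)) := by
          linarith
      _ ≤ _ := hlogK
end

section
/- Fix $0<\theta\leq 1$. Let $L_j=2^j$, $m_j=\lceil\theta L_j\rceil$, and let $(\mathcal{A}_j)$ be pairwise disjoint dyadic alphabets with $\#\mathcal{A}_j=N_j\geq m_j$. Let $\mathcal{B}_j\subset\mathcal{A}_j^{L_j}$ be the words whose prefix distinctness equals $\lceil\theta t\rceil$ at every time $1\leq t\leq L_j$. If $x\in[0,1)$ has digit sequence formed by concatenating blocks $b_j\in\mathcal{B}_j$ (in order), then for every $n$ with $S_{J-1}<n\leq S_J$ (where $S_J=\sum_{j\leq J}L_j$) one has $\theta n \leq D_n(x) < \theta n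 + J$, where $D_n(x)=\#\{d_1(x),\ldots,d_n(x)\}$. Consequently $\lim_{n\to\infty} D_n(x)/n=\theta$. -/
theorem stmt13_two_pow : ∀ J : ℕ, 5 ≤ J → J * J + 2 ≤ 2 ^ J := by
  intro J hJ
  induction J, hJ using Nat.le_induction with
  | base => norm_num
  | succ K hK ih =>
    have h2 : 2 ^ (K + 1) = 2 * 2 ^ K := by ring
    nlinarith

/-- Block concatenation construction: if the digit sequence `d` is a concatenation of
admissible blocks over pairwise disjoint alphabets, with block `j` of length `2^j` and
prefix distinctness profile `⌈θt⌉`, then for `S(J-1) < n ≤ S(J)` the distinct-digit count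
`D_n` satisfies `θn ≤ D_n < θn + J`, and `D_n/n → θ`. -/
theorem stmt13 (θ : ℝ) (hθ0 : 0 < θ) (hθ1 : θ ≤ 1)
    (A : ℕ → Finset ℕ)
    (hA : ∀ j : ℕ, 1 ≤ j → ⌈θ * ((2 : ℝ) ^ j)⌉₊ ≤ (A j).card)
    (hdisj : Pairwise (Function.onFun Disjoint A))
    (d : ℕ → ℕ)
    (S : ℕ → ℕ) (hS : ∀ J, S J = ∑ j ∈ Finset.Icc 1 J, 2 ^ j)
    (hblock : ∀ j : ℕ, 1 ≤ j → ∀ t : ℕ, 1 ≤ t → t ≤ 2 ^ j →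
      d (S (j - 1) + t) ∈ A j ∧
      ((Finset.Icc 1 t).image (fun i => d (S (j - 1) + i))).card = ⌈θ * (t : ℝ)⌉₊) :
    (∀ J n : ℕ, 1 ≤ J → S (J - 1) < n → n ≤ S J →
      θ * n ≤ (((Finset.Icc 1 n).image d).card : ℝ) ∧
      (((Finset.Icc 1 n).image d).card : ℝ) < θ * n + J) ∧
    Filter.Tendsto (fun n : ℕ => (((Finset.Icc 1 n).image d).card : ℝ) / n)
      Filter.atTop (nhds θ) := by
  have hS0 : S 0 = 0 := by rw [hS]; simp
  have hSstep : ∀ J : ℕ, 1 ≤ J → S J = S (J - 1) + 2 ^ J := by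
    intro J hJ
    obtain ⟨K, rfl⟩ : ∃ K, J = K + 1 := ⟨J - 1, by omega⟩
    rw [hS, hS]
    simp only [Nat.add_sub_cancel]
    rw [Finset.sum_Icc_succ_top (by omega)]
  have hSmono : Monotone S := by
    intro a b hab
    rw [hS, hS]
    exact Finset.sum_le_sum_of_subset (Finset.Icc_subset_Icc_right hab)
  have hSn : ∀ n : ℕ, n ≤ S n := by
    intro n
    rw [hS]
    calc n = ∑ _j ∈ Finset.Icc 1 n, 1 := by simp
    _ ≤ ∑ j ∈ Finset.Icc 1 n, 2 ^ j := by
        exact Finset.sum_le_sum fun j _ => Nat.one_le_two_pow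
  have hS2 : ∀ K : ℕ, S K + 2 = 2 ^ (K + 1) := by
    intro K
    induction K with
    | zero => simp [hS0]
    | succ L ih =>
      rw [hSstep (L + 1) (by omega)]
      simp only [Nat.add_sub_cancel]
      omega
  have himg : ∀ m t : ℕ, (Finset.Icc (m + 1) (m + t)).image d
      = (Finset.Icc 1 t).image (fun i => d (m + i)) := by
    intro m t
    ext a
    simp only [Finset.mem_image, Finset.mem_Icc]
    constructor
    · rintro ⟨i, ⟨h1, h2⟩, rfl⟩
      exact ⟨i - m, ⟨by omega, by omega⟩, by congr 1; omega⟩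
    · rintro ⟨i, ⟨h1, h2⟩, rfl⟩
      exact ⟨m + i, ⟨by omega, by omega⟩, rfl⟩
  have hsplit : ∀ m t : ℕ, Finset.Icc 1 (m + t) = Finset.Icc 1 m ∪ Finset.Icc (m + 1) (m + t) := by
    intro m t
    ext a
    simp only [Finset.mem_Icc, Finset.mem_union]
    omega
  -- the key extension step
  have step : ∀ J : ℕ, 1 ≤ J → ∀ t : ℕ, 1 ≤ t → t ≤ 2 ^ J →
      ((Finset.Icc 1 (S (J - 1))).image d).card
        = (∑ j ∈ Finset.Icc 1 (J - 1), ⌈θ * (2 : ℝ) ^ j⌉₊) →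
      (Finset.Icc 1 (S (J - 1))).image d ⊆ (Finset.Icc 1 (J - 1)).biUnion A →
      ((Finset.Icc 1 (S (J - 1) + t)).image d).card
        = (∑ j ∈ Finset.Icc 1 (J - 1), ⌈θ * (2 : ℝ) ^ j⌉₊) + ⌈θ * (t : ℝ)⌉₊ ∧
      (Finset.Icc 1 (S (J - 1) + t)).image d ⊆ (Finset.Icc 1 J).biUnion A := by
    intro J hJ t ht1 ht2 hcard hsub
    set m := S (J - 1) with hm
    have hB : (Finset.Icc (m + 1) (m + t)).image d
        = (Finset.Icc 1 t).image (fun i => d (m + i)) := himg m t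
    have hBsub : (Finset.Icc (m + 1) (m + t)).image d ⊆ A J := by
      rw [hB]
      intro a ha
      obtain ⟨i, hi, rfl⟩ := Finset.mem_image.1 ha
      rw [Finset.mem_Icc] at hi
      exact (hblock J hJ i hi.1 (le_trans hi.2 ht2)).1
    have hBcard : ((Finset.Icc (m + 1) (m + t)).image d).card = ⌈θ * (t : ℝ)⌉₊ := by
      rw [hB]
      exact (hblock J hJ t ht1 ht2).2
    have hdisj2 : Disjoint ((Finset.Icc 1 m).image d) ((Finset.Icc (m + 1) (m + t)).image d) := by
      rw [Finset.disjoint_left]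
      intro a ha hb
      obtain ⟨j, hj, haj⟩ := Finset.mem_biUnion.1 (hsub ha)
      rw [Finset.mem_Icc] at hj
      have hjJ : j ≠ J := by omega
      exact Finset.disjoint_left.1 (hdisj hjJ) haj (hBsub hb)
    constructor
    · rw [hsplit m t, Finset.image_union, Finset.card_union_of_disjoint hdisj2, hcard, hBcard]
    · rw [hsplit m t, Finset.image_union]
      apply Finset.union_subset
      · refine hsub.trans (Finset.biUnion_subset_biUnion_of_subset_left _ ?_)
        exact Finset.Icc_subset_Icc_right (by omega)
      · intro a ha
        exact Finset.mem_biUnion.2 ⟨J, Finset.mem_Icc.2 ⟨hJ, le_refl J⟩, hBsub ha⟩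
  -- prefix structure
  have prefixP : ∀ J : ℕ,
      ((Finset.Icc 1 (S J)).image d).card = (∑ j ∈ Finset.Icc 1 J, ⌈θ * (2 : ℝ) ^ j⌉₊) ∧
      (Finset.Icc 1 (S J)).image d ⊆ (Finset.Icc 1 J).biUnion A := by
    intro J
    induction J with
    | zero => simp [hS0]
    | succ K ih =>
      have hstep := step (K + 1) (by omega) (2 ^ (K + 1)) Nat.one_le_two_pow (le_refl _)
        (by simpa using ih.1) (by simpa using ih.2)
      simp only [Nat.add_sub_cancel] at hstep
      rw [hSstep (K + 1) (by omega)]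
      simp only [Nat.add_sub_cancel]
      constructor
      · rw [hstep.1, Finset.sum_Icc_succ_top (show 1 ≤ K + 1 by omega)]
        congr 2
        push_cast
        ring
      · exact hstep.2
  -- card formula for general n
  have main : ∀ J n : ℕ, 1 ≤ J → S (J - 1) < n → n ≤ S J →
      ((Finset.Icc 1 n).image d).card
        = (∑ j ∈ Finset.Icc 1 (J - 1), ⌈θ * (2 : ℝ) ^ j⌉₊) + ⌈θ * ((n - S (J - 1) : ℕ) : ℝ)⌉₊ := by
    intro J n hJ hlt hle
    have ht1 : 1 ≤ n - S (J - 1) := by omega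
    have ht2 : n - S (J - 1) ≤ 2 ^ J := by
      have := hSstep J hJ
      omega
    have hstep := step J hJ (n - S (J - 1)) ht1 ht2 (prefixP (J - 1)).1 (prefixP (J - 1)).2
    have heq : S (J - 1) + (n - S (J - 1)) = n := by omega
    rw [heq] at hstep
    exact hstep.1
  -- the two-sided bound
  have bound : ∀ J n : ℕ, 1 ≤ J → S (J - 1) < n → n ≤ S J →
      θ * n ≤ (((Finset.Icc 1 n).image d).card : ℝ) ∧
      (((Finset.Icc 1 n).image d).card : ℝ) < θ * n + J := by
    intro J n hJ hlt hle
    have hcard := main J n hJ hlt hle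
    set m := S (J - 1) with hm
    set t := n - m with htdef
    have hmn : (n : ℝ) = (m : ℝ) + (t : ℝ) := by
      have : m + t = n := by omega
      push_cast [← this]
      ring
    have hcastm : (m : ℝ) = ∑ j ∈ Finset.Icc 1 (J - 1), (2 : ℝ) ^ j := by
      rw [hm, hS]
      push_cast
      ring
    have hD : (((Finset.Icc 1 n).image d).card : ℝ)
        = (∑ j ∈ Finset.Icc 1 (J - 1), (⌈θ * (2 : ℝ) ^ j⌉₊ : ℝ)) + (⌈θ * (t : ℝ)⌉₊ : ℝ) := by
      rw [hcard]
      push_cast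
      ring
    have hlb1 : θ * (m : ℝ) ≤ ∑ j ∈ Finset.Icc 1 (J - 1), (⌈θ * (2 : ℝ) ^ j⌉₊ : ℝ) := by
      rw [hcastm, Finset.mul_sum]
      exact Finset.sum_le_sum fun j _ => Nat.le_ceil _
    have hlb2 : θ * (t : ℝ) ≤ (⌈θ * (t : ℝ)⌉₊ : ℝ) := Nat.le_ceil _
    have hub1 : ∑ j ∈ Finset.Icc 1 (J - 1), (⌈θ * (2 : ℝ) ^ j⌉₊ : ℝ)
        ≤ θ * (m : ℝ) + ((J - 1 : ℕ) : ℝ) := by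
      have h1 : ∑ j ∈ Finset.Icc 1 (J - 1), (⌈θ * (2 : ℝ) ^ j⌉₊ : ℝ)
          ≤ ∑ j ∈ Finset.Icc 1 (J - 1), (θ * (2 : ℝ) ^ j + 1) := by
        refine Finset.sum_le_sum fun j _ => ?_
        exact le_of_lt (Nat.ceil_lt_add_one (by positivity))
      calc ∑ j ∈ Finset.Icc 1 (J - 1), (⌈θ * (2 : ℝ) ^ j⌉₊ : ℝ)
          ≤ ∑ j ∈ Finset.Icc 1 (J - 1), (θ * (2 : ℝ) ^ j + 1) := h1
        _ = θ * (m : ℝ) + ((J - 1 : ℕ) : ℝ) := by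
            rw [Finset.sum_add_distrib, Finset.sum_const, hcastm, Finset.mul_sum]
            simp [Nat.card_Icc]
    have hub2 : (⌈θ * (t : ℝ)⌉₊ : ℝ) < θ * (t : ℝ) + 1 :=
      Nat.ceil_lt_add_one (by positivity)
    have hJcast : ((J - 1 : ℕ) : ℝ) + 1 = (J : ℝ) := by
      have : ((J - 1 : ℕ) : ℝ) = (J : ℝ) - 1 := by
        push_cast [Nat.cast_sub hJ]
        ring
      linarith
    constructor
    · rw [hD, hmn]; nlinarith
    · rw [hD, hmn]; nlinarith
  refine ⟨bound, ?_⟩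
  rw [Metric.tendsto_atTop]
  intro ε hε
  set M : ℕ := ⌈1 / ε⌉₊ + 5 with hM
  refine ⟨S M + 1, ?_⟩
  intro n hn
  have hn1 : 1 ≤ n := by omega
  have hex : ∃ J, n ≤ S J := ⟨n, hSn n⟩
  set Jn := Nat.find hex with hJndef
  have hJn2 : n ≤ S Jn := Nat.find_spec hex
  have hJn1 : 1 ≤ Jn := by
    rcases Nat.eq_zero_or_pos Jn with h | h
    · exfalso
      have := hJn2
      rw [h, hS0] at this
      omega
    · exact h
  have hJn3 : S (Jn - 1) < n := by
    have := Nat.find_min hex (show Jn - 1 < Jn by omega)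
    omega
  have hMJ : M < Jn := by
    by_contra h
    push_neg at h
    have := hSmono h
    omega
  have hpow : S (Jn - 1) + 2 = 2 ^ Jn := by
    have := hS2 (Jn - 1)
    have h1 : Jn - 1 + 1 = Jn := by omega
    rwa [h1] at this
  have hnbig : Jn * Jn < n := by
    have := stmt13_two_pow Jn (by omega)
    omega
  obtain ⟨hlow, hhigh⟩ := bound Jn n hJn1 hJn3 hJn2
  have hn0 : (0 : ℝ) < n := by exact_mod_cast hn1
  have hJn0 : (0 : ℝ) < Jn := by exact_mod_cast hJn1
  have hεJ : 1 < ε * Jn := by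
    have h1 : (1 / ε : ℝ) ≤ (⌈1 / ε⌉₊ : ℝ) := Nat.le_ceil _
    have h2 : ((⌈1 / ε⌉₊ : ℕ) : ℝ) < (Jn : ℝ) := by
      have : (M : ℝ) < (Jn : ℝ) := by exact_mod_cast hMJ
      have hMc : (M : ℝ) = (⌈1 / ε⌉₊ : ℝ) + 5 := by rw [hM]; push_cast; ring
      linarith
    have h3 : 1 / ε < (Jn : ℝ) := lt_of_le_of_lt h1 h2
    rw [div_lt_iff₀ hε] at h3
    linarith
  have hJJn : (Jn : ℝ) * (Jn : ℝ) < (n : ℝ) := by exact_mod_cast hnbig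
  have hJεn : (Jn : ℝ) < ε * n := by nlinarith
  rw [Real.dist_eq]
  have hge : θ ≤ (((Finset.Icc 1 n).image d).card : ℝ) / n := by
    rw [le_div_iff₀ hn0]
    linarith
  rw [abs_of_nonneg (by linarith)]
  rw [sub_lt_iff_lt_add, div_lt_iff₀ hn0]
  nlinarith
end
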